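/- Let H : ℝ → ℝ be continuous and coercive, let A = (p_α)_{α∈I} be a set limiter for H, and let F_A be the A-limited flux function. Then: (1) for every α ∈ I and every p ∈ (p_α⁻, p_α), F_A(p) > H(p); (2) for every α ∈ I and every p ∈ (p_α, p_α⁺), F_A(p) < H(p); (3) if p does not belong to ∪_{α∈I} ((p_α⁻, p_α) ∪ (p_α, p_α⁺)), then F_A(p) = H(p). -/
import Mathlib


open Set Filter Topology

/-- `p⁻ = sup {q < p : H(q) ≥ H(p)}`. -/
noncomputable def pminus (H : ℝ → ℝ) (p : ℝ) : ℝ :=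
  sSup {q : ℝ | q < p ∧ H p ≤ H q}

/-- `p⁺ = inf {q > p : H(q) ≤ H(p)}`, with `inf ∅ = +∞` (extended reals). -/
noncomputable def pplus (H : ℝ → ℝ) (p : ℝ) : EReal :=
  sInf (Real.toEReal '' {q : ℝ | p < q ∧ H q ≤ H p})

/-- `H(p) → +∞` as `|p| → +∞`. -/
def Coercive (H : ℝ → ℝ) : Prop :=
  Tendsto H atTop atTop ∧ Tendsto H atBot atTop

/-- `F(p) → +∞` as `p → -∞`. -/
def SemiCoercive (F : ℝ → ℝ) : Prop := Tendsto F atBot atTop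

/-- the open interval `(a⁻, a⁺)` (upper endpoint possibly `+∞`). -/
def ooMM (H : ℝ → ℝ) (a : ℝ) : Set ℝ :=
  {r : ℝ | pminus H a < r ∧ (r : EReal) < pplus H a}

/-- the open interval `(p, p⁺)` (upper endpoint possibly `+∞`). -/
def ooUp (H : ℝ → ℝ) (p : ℝ) : Set ℝ :=
  {r : ℝ | p < r ∧ (r : EReal) < pplus H p}

/-- the closed interval `[a⁻, a⁺]` (upper endpoint possibly `+∞`). -/
def ccMM (H : ℝ → ℝ) (a : ℝ) : Set ℝ :=
  {r : ℝ | pminus H a ≤ r ∧ (r : EReal) ≤ pplus H a}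

/-- `A` is a set limiter for `H`. -/
def IsSetLimiter (H : ℝ → ℝ) (A : Set ℝ) : Prop :=
  (∀ a ∈ A, (pminus H a : EReal) ≠ pplus H a) ∧
  (∀ a ∈ A, ∀ b ∈ A, a < b → H b ≤ H a) ∧
  (∀ p : ℝ, pminus H p < p → ∃ a ∈ A, (Ioo (pminus H p) p ∩ ooMM H a).Nonempty) ∧
  (∀ p : ℝ, (p : EReal) < pplus H p → ∃ a ∈ A, (ooUp H p ∩ ooMM H a).Nonempty)

open Classical in
/-- The `A`-limited flux function `F_A`: equal to `H(a)` on `[a⁻, a⁺]` for `a ∈ A`,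
and to `H` elsewhere. -/
noncomputable def limFlux (H : ℝ → ℝ) (A : Set ℝ) (p : ℝ) : ℝ :=
  if h : ∃ a, a ∈ A ∧ p ∈ ccMM H a then H h.choose else H p

/-- Condition (S) in the definition of `A_F`. -/
def CondS (H F : ℝ → ℝ) (p : ℝ) : Prop :=
  pminus H p ≠ p ∧ H p ≤ F p ∧
    ∀ q : ℝ, H q ≤ F q → (ooMM H q ∩ Ioo (pminus H p) p).Nonempty → H q ≤ H p

/-- Condition (T) in the definition of `A_F`. -/
def CondT (H F : ℝ → ℝ) (p : ℝ) : Prop :=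
  (p : EReal) ≠ pplus H p ∧ F p ≤ H p ∧
    ∀ q : ℝ, F q ≤ H q → (ooMM H q ∩ ooUp H p).Nonempty → H p ≤ H q

/-- The set `A_F` associated with a boundary function `F`. -/
def limiterOf (H F : ℝ → ℝ) : Set ℝ := {p : ℝ | CondS H F p ∨ CondT H F p}


section slAux

variable (H : ℝ → ℝ)

lemma sl_bdd (p : ℝ) : BddAbove {q : ℝ | q < p ∧ H p ≤ H q} :=
  ⟨p, fun _ hq => hq.1.le⟩

lemma sl_L1 {p q : ℝ} (h1 : pminus H p < q) (h2 : q < p) : H q < H p := by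
  by_contra hc
  push_neg at hc
  exact absurd (le_csSup (sl_bdd H p) ⟨h2, hc⟩) (not_le.2 h1)

lemma sl_L2 {p q : ℝ} (h1 : p < q) (h2 : (q : EReal) < pplus H p) : H p < H q := by
  by_contra hc
  push_neg at hc
  have hmem : (q : EReal) ∈ Real.toEReal '' {q : ℝ | p < q ∧ H q ≤ H p} :=
    ⟨q, ⟨h1, hc⟩, rfl⟩
  exact absurd (sInf_le hmem) (not_le.2 h2)

lemma sl_ne (hcoer : Tendsto H atBot atTop) (p : ℝ) :
    {q : ℝ | q < p ∧ H p ≤ H q}.Nonempty := by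
  obtain ⟨q, hq⟩ := ((hcoer.eventually_ge_atTop (H p)).and (eventually_lt_atBot p)).exists
  exact ⟨q, hq.2, hq.1⟩

lemma sl_L4 (hcoer : Tendsto H atBot atTop) (p : ℝ) : pminus H p ≤ p :=
  csSup_le (sl_ne H hcoer p) fun _ hq => hq.1.le

lemma sl_L5 (p : ℝ) : (p : EReal) ≤ pplus H p := by
  refine le_sInf ?_
  rintro x ⟨q, ⟨h1, _⟩, rfl⟩
  exact_mod_cast h1.le

lemma sl_L6 (hH : Continuous H) {p : ℝ} (h : pminus H p < p) : H (pminus H p) ≤ H p := by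
  have ht : Tendsto H (𝓝[>] (pminus H p)) (𝓝 (H (pminus H p))) :=
    (hH.tendsto _).mono_left nhdsWithin_le_nhds
  refine le_of_tendsto ht ?_
  filter_upwards [Ioo_mem_nhdsGT_of_mem ⟨le_refl _, h⟩] with q hq
  exact (sl_L1 H hq.1 hq.2).le

lemma sl_L7 (hH : Continuous H) (hcoer : Tendsto H atBot atTop) (p : ℝ) :
    H p ≤ H (pminus H p) := by
  have hmem : pminus H p ∈ closure {q : ℝ | q < p ∧ H p ≤ H q} :=
    csSup_mem_closure (sl_ne H hcoer p) (sl_bdd H p)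
  exact closure_minimal (fun q hq => hq.2) (isClosed_le continuous_const hH) hmem

lemma sl_L8a (hH : Continuous H) {p r : ℝ} (hpr : p < r) (h : pplus H p = (r : EReal)) :
    H p ≤ H r := by
  have ht : Tendsto H (𝓝[<] r) (𝓝 (H r)) := (hH.tendsto _).mono_left nhdsWithin_le_nhds
  refine ge_of_tendsto ht ?_
  filter_upwards [Ioo_mem_nhdsLT_of_mem ⟨hpr, le_refl r⟩] with q hq
  exact (sl_L2 H hq.1 (by rw [h]; exact_mod_cast hq.2)).le

lemma sl_L8b (hH : Continuous H) {p r : ℝ} (h : pplus H p = (r : EReal)) :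
    H r ≤ H p := by
  have h' : sInf (Real.toEReal '' {q : ℝ | p < q ∧ H q ≤ H p}) = (r : EReal) := h
  have hcl : r ∈ closure {q : ℝ | p < q ∧ H q ≤ H p} := by
    rw [Metric.mem_closure_iff]
    intro ε hε
    have hlt : sInf (Real.toEReal '' {q : ℝ | p < q ∧ H q ≤ H p}) < ((r + ε : ℝ) : EReal) := by
      rw [h']
      exact_mod_cast lt_add_of_pos_right r hε
    obtain ⟨x, hx, hxlt⟩ := sInf_lt_iff.1 hlt
    obtain ⟨q, hq, rfl⟩ := hx
    have hge : r ≤ q := by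
      have h2 : sInf (Real.toEReal '' {q : ℝ | p < q ∧ H q ≤ H p}) ≤ (q : EReal) :=
        sInf_le ⟨q, hq, rfl⟩
      rw [h'] at h2
      exact_mod_cast h2
    have hlt2 : q < r + ε := by exact_mod_cast hxlt
    refine ⟨q, hq, ?_⟩
    rw [Real.dist_eq, abs_sub_comm, abs_of_nonneg (sub_nonneg.2 hge)]
    linarith
  exact closure_minimal (fun q hq => hq.2) (isClosed_le hH continuous_const) hcl

lemma sl_key1 {A : Set ℝ} (hord : ∀ x ∈ A, ∀ y ∈ A, x < y → H y ≤ H x)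
    {a b p : ℝ} (ha : a ∈ A) (hbA : b ∈ A) (hp1 : pminus H a < p) (hp2 : p < a)
    (hb1 : pminus H b ≤ p) : H p < H b := by
  have hpa : H p < H a := sl_L1 H hp1 hp2
  rcases lt_trichotomy b a with h | h | h
  · exact lt_of_lt_of_le hpa (hord b hbA a ha h)
  · rw [h]; exact hpa
  · rcases eq_or_lt_of_le hb1 with heq | hlt
    · exfalso
      have hab : H a < H b := sl_L1 H (by rw [heq]; exact hp2) h
      exact absurd (hord a ha b hbA h) (not_le.2 hab)
    · exact sl_L1 H hlt (lt_trans hp2 h)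

lemma sl_key2 {A : Set ℝ} (hord : ∀ x ∈ A, ∀ y ∈ A, x < y → H y ≤ H x)
    {a b p : ℝ} (ha : a ∈ A) (hbA : b ∈ A) (hp1 : a < p) (hp2 : (p : EReal) < pplus H a)
    (hb2 : (p : EReal) ≤ pplus H b) : H b < H p := by
  have hpa : H a < H p := sl_L2 H hp1 hp2
  rcases lt_trichotomy b a with h | h | h
  · rcases eq_or_lt_of_le hb2 with heq | hlt
    · exfalso
      have hab : H b < H a := sl_L2 H h (by rw [← heq]; exact_mod_cast hp1)
      exact absurd (hord b hbA a ha h) (not_le.2 hab)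
    · exact sl_L2 H (lt_trans h hp1) hlt
  · rw [h]; exact hpa
  · exact lt_of_le_of_lt (hord a ha b hbA h) hpa

lemma sl_key3 (hH : Continuous H) (hbot : Tendsto H atBot atTop) {b p : ℝ}
    (hb1 : pminus H b ≤ p) (hb2 : (p : EReal) ≤ pplus H b)
    (hn1 : p ∉ Ioo (pminus H b) b) (hn2 : p ∉ ooUp H b) : H b = H p := by
  rcases lt_trichotomy p b with h | h | h
  · have heq : pminus H b = p := by
      rcases eq_or_lt_of_le hb1 with he | hl
      · exact he
      · exact absurd ⟨hl, h⟩ hn1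
    have hl6 : H p ≤ H b := by rw [← heq]; exact sl_L6 H hH (by rw [heq]; exact h)
    have hl7 : H b ≤ H p := by rw [← heq]; exact sl_L7 H hH hbot b
    exact le_antisymm hl7 hl6
  · rw [h]
  · have heq : pplus H b = (p : EReal) := by
      rcases eq_or_lt_of_le hb2 with he | hl
      · exact he.symm
      · exact absurd ⟨h, hl⟩ hn2
    exact le_antisymm (sl_L8a H hH h heq) (sl_L8b H hH heq)


end slAux

theorem stmt4 (H : ℝ → ℝ) (hH : Continuous H) (hcoer : Coercive H)
    (A : Set ℝ) (hA : IsSetLimiter H A) :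
    (∀ a ∈ A, ∀ p ∈ Ioo (pminus H a) a, H p < limFlux H A p) ∧
    (∀ a ∈ A, ∀ p ∈ ooUp H a, limFlux H A p < H p) ∧
    (∀ p : ℝ, (∀ a ∈ A, p ∉ Ioo (pminus H a) a ∧ p ∉ ooUp H a) →
      limFlux H A p = H p) := by
  obtain ⟨hA1, hA2, hA3, hA4⟩ := hA
  have hbot := hcoer.2
  refine ⟨?_, ?_, ?_⟩
  · intro a ha p hp
    have hex : ∃ b, b ∈ A ∧ p ∈ ccMM H b :=
      ⟨a, ha, hp.1.le, le_trans (by exact_mod_cast hp.2.le) (sl_L5 H a)⟩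
    simp only [limFlux, dif_pos hex]
    obtain ⟨hbA, hb1, hb2⟩ := hex.choose_spec
    exact sl_key1 H hA2 ha hbA hp.1 hp.2 hb1
  · intro a ha p hp
    have hex : ∃ b, b ∈ A ∧ p ∈ ccMM H b :=
      ⟨a, ha, le_trans (sl_L4 H hbot a) hp.1.le, hp.2.le⟩
    simp only [limFlux, dif_pos hex]
    obtain ⟨hbA, hb1, hb2⟩ := hex.choose_spec
    exact sl_key2 H hA2 ha hbA hp.1 hp.2 hb2
  · intro p hp
    simp only [limFlux]
    split_ifs with hex
    · obtain ⟨hbA, hb1, hb2⟩ := hex.choose_spec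
      obtain ⟨hn1, hn2⟩ := hp _ hbA
      exact sl_key3 H hH hbot hb1 hb2 hn1 hn2
    · rfl
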